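/- For 0 < α < 1 and λ ∈ ℂ, the Riemann–Liouville fractional integral of order 1-α of the function t ↦ t^{α-1} E_{α,α}(λ t^α) equals E_{α,1}(λ t^α); that is, (1/Γ(1-α)) ∫₀^t (t-s)^{-α} s^{α-1} E_{α,α}(λ s^α) ds = E_{α,1}(λ t^α) for t > 0. -/

import Mathlib

open MeasureTheory Set

open Real in
theorem gr (α : ℝ) (hα : 0 < α) (hα1 : α ≤ 1) (y : ℝ) (hy : 0 < y) :
    y * Real.Gamma y ≤ Real.Gamma (y + α) * (y + α) ^ (1 - α) := by
  have h1 : (0:ℝ) < y + α := by linarith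
  have h2 : (0:ℝ) < y + 1 + α := by linarith
  have hc := Real.convexOn_log_Gamma.2 (Set.mem_Ioi.2 h1) (Set.mem_Ioi.2 h2)
    hα.le (by linarith : (0:ℝ) ≤ 1 - α) (by ring)
  have hpt : α • (y + α) + (1 - α) • (y + 1 + α) = y + 1 := by simp [smul_eq_mul]; ring
  rw [hpt] at hc
  simp only [Function.comp] at hc
  have hG1 : Real.Gamma (y+1+α) = (y+α) * Real.Gamma (y+α) := by
    have := Real.Gamma_add_one h1.ne'
    rw [show y+1+α = y+α+1 by ring, this]
  rw [hG1, Real.log_mul h1.ne' (Real.Gamma_pos_of_pos h1).ne'] at hc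
  have key : Real.log (Real.Gamma (y+1)) ≤ Real.log (Real.Gamma (y+α)) + (1-α) * Real.log (y+α) := by
    simp only [smul_eq_mul] at hc; linarith
  have := Real.exp_le_exp.2 key
  rw [Real.exp_log (Real.Gamma_pos_of_pos (by linarith)), Real.exp_add,
    Real.exp_log (Real.Gamma_pos_of_pos h1), mul_comm (1-α)] at this
  rw [← Real.rpow_def_of_pos h1] at this
  calc y * Real.Gamma y = Real.Gamma (y+1) := (Real.Gamma_add_one hy.ne').symm
  _ ≤ _ := this

theorem sml (α β : ℝ) (hα : 0 < α) (hα1 : α ≤ 1) (hβ : 0 < β) (x : ℝ) (hx : 0 ≤ x) :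
    Summable (fun k : ℕ => x ^ k / Real.Gamma (α * k + β)) := by
  apply summable_of_ratio_norm_eventually_le (r := 1/2) (by norm_num)
  have hM : ∃ N : ℕ, ∀ k ≥ N, max α ((4*x+1) ^ α⁻¹) ≤ α * k + β := by
    obtain ⟨N, hN⟩ := exists_nat_ge ((max α ((4*x+1) ^ α⁻¹)) / α)
    exact ⟨N, fun k hk => by
      have : (max α ((4*x+1) ^ α⁻¹)) / α ≤ (k:ℝ) := hN.trans (by exact_mod_cast hk)
      rw [div_le_iff₀ hα] at this
      nlinarith⟩
  obtain ⟨N, hN⟩ := hM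
  filter_upwards [Filter.eventually_ge_atTop N] with k hk
  set y := α * k + β with hy
  have hy0 : 0 < y := by positivity
  have hbd := hN k hk
  have hyα : α ≤ y := le_trans (le_max_left _ _) hbd
  have hy4x : 4 * x ≤ y ^ α := by
    have h1 : (4*x+1) ^ α⁻¹ ≤ y := le_trans (le_max_right _ _) hbd
    have h2 : ((4*x+1) ^ α⁻¹) ^ α ≤ y ^ α :=
      Real.rpow_le_rpow (Real.rpow_nonneg (by linarith) _) h1 hα.le
    rw [← Real.rpow_mul (by linarith), inv_mul_cancel₀ hα.ne', Real.rpow_one] at h2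
    linarith
  have hG : Real.Gamma y * (y ^ α / 2) ≤ Real.Gamma (y + α) := by
    have h1 := gr α hα hα1 y hy0
    have h2 : (y + α) ^ (1 - α) ≤ 2 * y ^ (1 - α) := by
      calc (y + α) ^ (1-α) ≤ (2*y) ^ (1-α) :=
            Real.rpow_le_rpow (by linarith) (by linarith) (by linarith)
        _ = 2 ^ (1-α) * y ^ (1-α) := Real.mul_rpow (by norm_num) hy0.le
        _ ≤ 2 * y ^ (1-α) := by
            have h3 : (2:ℝ) ^ (1-α) ≤ 2 ^ (1:ℝ) :=
              Real.rpow_le_rpow_of_exponent_le (by norm_num) (by linarith)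
            rw [Real.rpow_one] at h3
            nlinarith [Real.rpow_pos_of_pos hy0 (1-α), Real.rpow_nonneg hy0.le (1-α)]
    have hGp := Real.Gamma_pos_of_pos hy0
    have hGp2 := Real.Gamma_pos_of_pos (show (0:ℝ) < y + α by linarith)
    have hsplit : y ^ α * y ^ (1-α) = y := by
      rw [← Real.rpow_add hy0]; norm_num
    -- from h1, h2 : y Γ(y) ≤ Γ(y+α) (y+α)^{1-α} ≤ Γ(y+α) 2 y^{1-α}
    have h4 : y * Real.Gamma y ≤ Real.Gamma (y+α) * (2 * y ^ (1-α)) := by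
      calc y * Real.Gamma y ≤ Real.Gamma (y+α) * (y+α)^(1-α) := h1
        _ ≤ Real.Gamma (y+α) * (2 * y ^ (1-α)) := by
            exact mul_le_mul_of_nonneg_left h2 hGp2.le
    have hyp : 0 < y ^ (1-α) := Real.rpow_pos_of_pos hy0 _
    have h6 : (Real.Gamma y * (y^α/2)) * y^(1-α) ≤ Real.Gamma (y+α) * y^(1-α) := by
      nlinarith [h4, hsplit]
    exact le_of_mul_le_mul_right h6 hyp
  -- now the ratio
  have hy' : α * (k+1 : ℕ) + β = y + α := by push_cast; ring
  rw [hy']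
  have hGp := Real.Gamma_pos_of_pos hy0
  have hGp2 := Real.Gamma_pos_of_pos (show (0:ℝ) < y + α by linarith)
  rw [Real.norm_eq_abs, Real.norm_eq_abs, abs_div, abs_div, abs_of_pos hGp, abs_of_pos hGp2,
    abs_pow, abs_pow, abs_of_nonneg hx]
  have hxk : (0:ℝ) ≤ x ^ k := pow_nonneg hx k
  have h7 : x^k * (Real.Gamma y * (y^α/2)) ≤ x^k * Real.Gamma (y+α) :=
    mul_le_mul_of_nonneg_left hG hxk
  have h8 : (x^k * Real.Gamma y) * (4*x) ≤ (x^k * Real.Gamma y) * (y^α) :=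
    mul_le_mul_of_nonneg_left (by linarith) (by positivity)
  have key : x^(k+1) * Real.Gamma y * 2 ≤ x^k * Real.Gamma (y+α) := by
    rw [pow_succ]; nlinarith [h7, h8]
  rw [div_le_iff₀ hGp2]
  have h9 : (1:ℝ)/2 * (x^k/Real.Gamma y) * Real.Gamma (y+α)
      = (x^k * Real.Gamma (y+α)) / (2 * Real.Gamma y) := by
    field_simp
  rw [h9, le_div_iff₀ (by positivity)]
  nlinarith [key]

theorem intOn (a b t : ℝ) (ha : -1 < a) (hb : -1 < b) (ht : 0 < t) :
    IntegrableOn (fun s => (t-s) ^ b * s ^ a) (Ioc 0 t) := by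
  have hm0 : Measurable (fun s : ℝ => (t-s) ^ b) := by
    have : Measurable (fun s : ℝ => t - s) := by fun_prop
    measurability
  have hm0' : Measurable (fun s : ℝ => s ^ a) := by
    have : Measurable (fun s : ℝ => s) := by fun_prop
    measurability
  have hmeas1 : AEStronglyMeasurable (fun s : ℝ => (t-s) ^ b)
      (volume.restrict (Ioc (0:ℝ) (t/2))) := hm0.aestronglyMeasurable
  have hmeas2 : AEStronglyMeasurable (fun s : ℝ => s ^ a)
      (volume.restrict (Ioc (t/2) t)) := hm0'.aestronglyMeasurable
  have part1 : IntegrableOn (fun s => (t-s) ^ b * s ^ a) (Ioc 0 (t/2)) := by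
    have h1 : IntegrableOn (fun s : ℝ => s ^ a) (Ioc 0 (t/2)) := by
      have := intervalIntegral.intervalIntegrable_rpow' (a := (0:ℝ)) (b := t/2) ha
      rwa [intervalIntegrable_iff_integrableOn_Ioc_of_le (by linarith)] at this
    refine Integrable.bdd_mul (c := max ((t/2)^b) (t^b)) h1 hmeas1 ?_
    filter_upwards [ae_restrict_mem measurableSet_Ioc] with s hs
    have h2 : t/2 ≤ t - s := by linarith [hs.2]
    have h3 : t - s ≤ t := by linarith [hs.1]
    rw [Real.norm_eq_abs, abs_of_nonneg (Real.rpow_nonneg (by linarith) _)]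
    rcases le_or_gt 0 b with hb0 | hb0
    · exact le_max_of_le_right (Real.rpow_le_rpow (by linarith) h3 hb0)
    · exact le_max_of_le_left (Real.rpow_le_rpow_of_nonpos (by linarith) h2 hb0.le)
  have part2 : IntegrableOn (fun s => (t-s) ^ b * s ^ a) (Ioc (t/2) t) := by
    have h1 : IntegrableOn (fun s : ℝ => (t-s) ^ b) (Ioc (t/2) t) := by
      have h0 := intervalIntegral.intervalIntegrable_rpow' (a := (0:ℝ)) (b := t/2) hb
      have h0' := (h0.comp_sub_left t).symm
      simp only [sub_zero] at h0'
      rw [show t - t/2 = t/2 by ring] at h0'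
      rwa [intervalIntegrable_iff_integrableOn_Ioc_of_le (by linarith)] at h0'
    have := Integrable.bdd_mul (c := max ((t/2)^a) (t^a)) h1 hmeas2 ?_
    · exact this.congr (Filter.Eventually.of_forall fun x => mul_comm _ _)
    filter_upwards [ae_restrict_mem measurableSet_Ioc] with s hs
    have h2 : t/2 < s := hs.1
    have h3 : s ≤ t := hs.2
    rw [Real.norm_eq_abs, abs_of_nonneg (Real.rpow_nonneg (by linarith) _)]
    rcases le_or_gt 0 a with ha0 | ha0
    · exact le_max_of_le_right (Real.rpow_le_rpow (by linarith) h3 ha0)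
    · exact le_max_of_le_left (Real.rpow_le_rpow_of_nonpos (by linarith) h2.le ha0.le)
  rw [← Ioc_union_Ioc_eq_Ioc (le_of_lt (by linarith : (0:ℝ) < t/2)) (by linarith : t/2 ≤ t)]
  exact part1.union part2

theorem rbeta (u v t : ℝ) (hu : 0 < u) (hv : 0 < v) (ht : 0 < t) :
    ∫ s in Ioc (0:ℝ) t, (t-s) ^ (v-1) * s ^ (u-1) =
      Real.Gamma u * Real.Gamma v / Real.Gamma (u+v) * t ^ (u+v-1) := by
  have hGuv : Real.Gamma (u+v) ≠ 0 := (Real.Gamma_pos_of_pos (by linarith)).ne'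
  have hB : Complex.betaIntegral u v =
      Complex.Gamma u * Complex.Gamma v / Complex.Gamma (u+v) := by
    rw [eq_div_iff (by
      rw [show ((u:ℂ) + v) = ((u+v : ℝ) : ℂ) by push_cast; ring, Complex.Gamma_ofReal]
      exact_mod_cast hGuv)]
    rw [mul_comm]
    exact (Complex.Gamma_mul_Gamma_eq_betaIntegral
      (by simpa using hu) (by simpa using hv)).symm
  have hc := Complex.betaIntegral_scaled (u:ℂ) (v:ℂ) ht
  rw [intervalIntegral.integral_of_le ht.le] at hc
  rw [setIntegral_congr_fun measurableSet_Ioc (g := fun s : ℝ =>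
      (((t-s) ^ (v-1) * s ^ (u-1) : ℝ) : ℂ)) ?_] at hc
  · have hc2 : ((∫ s in Ioc (0:ℝ) t, (t-s) ^ (v-1) * s ^ (u-1) : ℝ) : ℂ)
        = (t:ℂ) ^ ((u:ℂ) + v - 1) * Complex.betaIntegral u v := by
      rw [← hc]; exact integral_ofReal.symm
    have ht' : ((t:ℂ)) ^ ((u:ℂ) + v - 1) = ((t ^ (u+v-1) : ℝ) : ℂ) := by
      rw [Complex.ofReal_cpow ht.le]
      push_cast; ring_nf
    rw [ht', hB] at hc2
    have heq : ((t ^ (u+v-1) : ℝ) : ℂ) * (Complex.Gamma u * Complex.Gamma v / Complex.Gamma (u+v))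
        = ((t ^ (u+v-1) * (Real.Gamma u * Real.Gamma v / Real.Gamma (u+v)) : ℝ) : ℂ) := by
      rw [show ((u:ℂ) + v) = ((u+v : ℝ) : ℂ) by push_cast; ring, Complex.Gamma_ofReal,
        Complex.Gamma_ofReal, Complex.Gamma_ofReal]
      push_cast
      ring
    rw [heq] at hc2
    have := Complex.ofReal_injective hc2
    rw [this]; ring
  · intro s hs
    simp only [Complex.ofReal_mul,
      Complex.ofReal_cpow (by linarith [hs.2] : (0:ℝ) ≤ t - s),
      Complex.ofReal_cpow hs.1.le]
    push_cast
    ring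

theorem smlC (α β : ℝ) (hα : 0 < α) (hα1 : α ≤ 1) (hβ : 0 < β) (z : ℂ) :
    Summable (fun k : ℕ => z ^ k / Complex.Gamma ((α * k + β : ℝ) : ℂ)) := by
  apply Summable.of_norm
  have : ∀ k : ℕ, ‖z ^ k / Complex.Gamma ((α * k + β : ℝ) : ℂ)‖
      = ‖z‖ ^ k / Real.Gamma (α * k + β) := by
    intro k
    rw [norm_div, norm_pow, Complex.Gamma_ofReal, Complex.norm_real, Real.norm_eq_abs,
      abs_of_pos (Real.Gamma_pos_of_pos (by positivity))]
  rw [funext this]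
  exact sml α β hα hα1 hβ ‖z‖ (norm_nonneg z)

/-- The two-parameter Mittag-Leffler function. -/
noncomputable def mittagLeffler (α β : ℝ) (z : ℂ) : ℂ :=
  ∑' k : ℕ, z ^ k / Complex.Gamma ((α * k + β : ℝ) : ℂ)

/-- `J^{1-α}(t^{α-1} E_{α,α}(λ t^α)) = E_{α,1}(λ t^α)` for `0 < α < 1`. -/
theorem stmt2 (α : ℝ) (hα : 0 < α) (hα1 : α < 1) (lam : ℂ) (t : ℝ) (ht : 0 < t) :
    (1 / Real.Gamma (1 - α)) •
        ∫ s in (0:ℝ)..t,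
          ((t - s) ^ (-α) * s ^ (α - 1)) • mittagLeffler α α (lam * (s : ℂ) ^ (α : ℂ))
      = mittagLeffler α 1 (lam * (t : ℂ) ^ (α : ℂ)) := by
  set F : ℕ → ℝ → ℂ := fun k s =>
    ((t - s) ^ (-α) * s ^ (α - 1)) •
      ((lam * (s : ℂ) ^ (α : ℂ)) ^ k / Complex.Gamma ((α * k + α : ℝ) : ℂ)) with hF
  set φ : ℕ → ℝ → ℝ := fun k s => (t - s) ^ (-α) * s ^ (α * (k+1) - 1) with hφ
  set C : ℕ → ℂ := fun k => lam ^ k / Complex.Gamma ((α * k + α : ℝ) : ℂ) with hC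
  have hGpos : ∀ k : ℕ, (0:ℝ) < Real.Gamma (α * k + α) := fun k => by positivity
  have hGpos1 : ∀ k : ℕ, (0:ℝ) < Real.Gamma (α * k + 1) := fun k => by positivity
  have hdagger : ∀ k : ℕ, ∀ s ∈ Ioc (0:ℝ) t, F k s = φ k s • C k := by
    intro k s hs
    have hs0 : 0 < s := hs.1
    have hcp : (s : ℂ) ^ (α : ℂ) = ((s ^ α : ℝ) : ℂ) := (Complex.ofReal_cpow hs0.le α).symm
    simp only [hF, hφ, hC, hcp]
    rw [mul_pow, ← Complex.ofReal_pow, ← Real.rpow_natCast (s ^ α) k,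
      ← Real.rpow_mul hs0.le]
    rw [Complex.real_smul, Complex.real_smul]
    push_cast
    have hsplit : s ^ (α-1) * s ^ (α * (k:ℝ)) = s ^ (α * ((k:ℝ)+1) - 1) := by
      rw [← Real.rpow_add hs0, show α - 1 + α * (k:ℝ) = α * ((k:ℝ)+1) - 1 by ring]
    rw [← hsplit]
    push_cast
    ring
  have hφint : ∀ k : ℕ, IntegrableOn (φ k) (Ioc 0 t) := by
    intro k
    have h1 : (0:ℝ) < α * ((k:ℝ)+1) := by positivity
    exact intOn (α * (k+1) - 1) (-α) t (by linarith) (by linarith) ht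
  have hφval : ∀ k : ℕ, ∫ s in Ioc (0:ℝ) t, φ k s
      = Real.Gamma (α*(k+1)) * Real.Gamma (1-α) / Real.Gamma (α*k+1) * t ^ (α*(k:ℝ)) := by
    intro k
    have h1 : (0:ℝ) < α * ((k:ℝ)+1) := by positivity
    have := rbeta (α*((k:ℝ)+1)) (1-α) t h1 (by linarith) ht
    rw [show (1-α) - 1 = -α by ring, show α*((k:ℝ)+1) + (1-α) = α*(k:ℝ)+1 by ring,
      show α*(k:ℝ)+1-1 = α*(k:ℝ) by ring] at this
    simpa [hφ] using this
  have hφnonneg : ∀ k : ℕ, ∀ s ∈ Ioc (0:ℝ) t, 0 ≤ φ k s := by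
    intro k s hs
    have h2 : (0:ℝ) ≤ t - s := by linarith [hs.2]
    exact mul_nonneg (Real.rpow_nonneg h2 _) (Real.rpow_nonneg hs.1.le _)
  have hFint : ∀ k : ℕ, IntegrableOn (F k) (Ioc 0 t) := by
    intro k
    apply (((hφint k).smul_const (C k)).congr ?_)
    filter_upwards [ae_restrict_mem measurableSet_Ioc] with s hs
    exact (hdagger k s hs).symm
  have hnormC : ∀ k : ℕ, ‖C k‖ = ‖lam‖ ^ k / Real.Gamma (α*k+α) := by
    intro k
    rw [hC]
    rw [norm_div, norm_pow, Complex.Gamma_ofReal, Complex.norm_real, Real.norm_eq_abs,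
      abs_of_pos (hGpos k)]
  have htk : ∀ k : ℕ, (t ^ α) ^ k = t ^ (α*(k:ℝ)) := by
    intro k
    rw [← Real.rpow_natCast (t ^ α) k, ← Real.rpow_mul ht.le]
  have hFnorm : ∀ k : ℕ, ∫ s in Ioc (0:ℝ) t, ‖F k s‖
      = Real.Gamma (1-α) * ((‖lam‖ * t ^ α) ^ k / Real.Gamma (α*k+1)) := by
    intro k
    rw [setIntegral_congr_fun measurableSet_Ioc
      (g := fun s => φ k s * ‖C k‖) ?_]
    · rw [integral_mul_const, hφval k, hnormC k, mul_pow, htk k,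
        show α*((k:ℝ)+1) = α*(k:ℝ)+α by ring]
      field_simp
    · intro s hs
      show ‖F k s‖ = φ k s * ‖C k‖
      rw [hdagger k s hs, norm_smul, Real.norm_eq_abs, abs_of_nonneg (hφnonneg k s hs)]
  have hsum : Summable (fun k : ℕ => ∫ s in Ioc (0:ℝ) t, ‖F k s‖) := by
    rw [funext hFnorm]
    exact (sml α 1 hα hα1.le one_pos (‖lam‖ * t ^ α) (by positivity)).mul_left _
  have hJ : ∀ k : ℕ, (∫ s in Ioc (0:ℝ) t, F k s)
      = Real.Gamma (1-α) • ((lam * (t:ℂ) ^ (α:ℂ)) ^ k / Complex.Gamma ((α*k+1 : ℝ) : ℂ)) := by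
    intro k
    rw [setIntegral_congr_fun measurableSet_Ioc (g := fun s => φ k s • C k) (hdagger k)]
    rw [integral_smul_const, hφval k]
    have e1 : Complex.Gamma ((α*(k:ℝ)+α : ℝ) : ℂ) = ((Real.Gamma (α*((k:ℝ)+1))) : ℂ) := by
      rw [show (α*(k:ℝ)+α : ℝ) = α*((k:ℝ)+1) by ring, Complex.Gamma_ofReal]
    have e2 : Complex.Gamma ((α*(k:ℝ)+1 : ℝ) : ℂ) = ((Real.Gamma (α*(k:ℝ)+1)) : ℂ) :=
      Complex.Gamma_ofReal _
    have hcp : (t : ℂ) ^ (α : ℂ) = ((t ^ α : ℝ) : ℂ) := (Complex.ofReal_cpow ht.le α).symm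
    simp only [hC, e1, e2, hcp, Complex.real_smul, mul_pow, ← Complex.ofReal_pow, htk k]
    have h1 : (Real.Gamma (α*((k:ℝ)+1)) : ℂ) ≠ 0 := by
      exact_mod_cast (Real.Gamma_pos_of_pos (by positivity : (0:ℝ) < α*((k:ℝ)+1))).ne'
    have h2 : (Real.Gamma (α*(k:ℝ)+1) : ℂ) ≠ 0 := by
      exact_mod_cast (hGpos1 k).ne'
    push_cast
    field_simp
  have hml : ∀ s : ℝ, ((t - s) ^ (-α) * s ^ (α - 1)) • mittagLeffler α α (lam * (s:ℂ) ^ (α:ℂ))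
      = ∑' k, F k s := by
    intro s
    rw [mittagLeffler]
    exact (Summable.tsum_const_smul _ (smlC α α hα hα1.le hα _)).symm
  rw [intervalIntegral.integral_of_le ht.le]
  simp only [hml]
  rw [← integral_tsum_of_summable_integral_norm hFint hsum]
  simp only [hJ]
  rw [Summable.tsum_const_smul _ (smlC α 1 hα hα1.le one_pos _)]
  rw [smul_smul, one_div, inv_mul_cancel₀ (Real.Gamma_pos_of_pos
    (by linarith : (0:ℝ) < 1 - α)).ne', one_smul, mittagLeffler]
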